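/- arXiv:2005.06227 — 6 statements merged into one kernel-verified Lean document; each statement's English description precedes it below -/
import Mathlib

section
/- Let P be a preorder and D : Set P → P → Prop a one-step fact-derivation relation that is one-step monotone with respect to the Hoare order: whenever Δ ⊑ Δ' and D Δ f hold, there exists f' with f ≤ f' and D Δ' f'. Then the multi-step derivability relation is monotone: for all abstract configurations Δ, Δ', Δ_F with Δ ⊑ Δ', if Δ_F is derivable from Δ then there exists Δ_F' derivable from Δ' with Δ_F ⊑ Δ_F'. -/
/-- Hoare order on sets of abstract facts over a preorder. -/
def HoareLe {P : Type*} [Preorder P] (Δ₁ Δ₂ : Set P) : Prop :=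
  ∀ p₁ ∈ Δ₁, ∃ p₂ ∈ Δ₂, p₁ ≤ p₂

/-- One derivation step: derive a fact f from Δ and add it. -/
def DeriveStep {P : Type*} (D : Set P → P → Prop) (Δ Δ'' : Set P) : Prop :=
  ∃ f, D Δ f ∧ Δ'' = Δ ∪ {f}

/-- One-step monotonicity of fact derivation implies monotonicity of
multi-step derivability with respect to the Hoare order. -/
theorem derivable_monotone {P : Type*} [Preorder P] (D : Set P → P → Prop)
    (hmono : ∀ Δ Δ' f, HoareLe Δ Δ' → D Δ f → ∃ f', f ≤ f' ∧ D Δ' f') :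
    ∀ Δ Δ' ΔF : Set P, HoareLe Δ Δ' →
      Relation.ReflTransGen (DeriveStep D) Δ ΔF →
      ∃ ΔF', Relation.ReflTransGen (DeriveStep D) Δ' ΔF' ∧ HoareLe ΔF ΔF' := by
  intro Δ Δ' ΔF hle hderiv
  induction hderiv with
  | refl => exact ⟨Δ', .refl, hle⟩
  | tail _ hstep ih =>
    rename_i b c _
    obtain ⟨Δb', hd', hle'⟩ := ih
    obtain ⟨f, hDf, rfl⟩ := hstep
    obtain ⟨f', hff', hDf'⟩ := hmono b Δb' f hle' hDf
    refine ⟨Δb' ∪ {f'}, hd'.tail ⟨f', hDf', rfl⟩, ?_⟩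
    intro p hp
    rcases hp with hp | hp
    · obtain ⟨q, hq, hpq⟩ := hle' p hp
      exact ⟨q, Or.inl hq, hpq⟩
    · exact ⟨f', Or.inr rfl, hp ▸ hff'⟩
end

section
/- Let C be a type, S a binary relation on C (the small-step semantics), P a preorder, α : C → Set P, and D : Set P → P → Prop a one-step fact-derivation relation, such that (α, D) soundly approximates S: for all c, c' with (c, c') in the reflexive-transitive closure of S, and every Δ with α(c) ⊑ Δ, there exists Δ' derivable from Δ with α(c') ⊑ Δ'. Let P₀, R : Set C with α(c') ≠ ∅ for every c' ∈ R, and let Δ_P : Set P satisfy α*(P₀) ⊑ Δ_P. If every Δ' derivable from Δ_P satisfies Δ' ∩ Δ_query(R) = ∅, where Δ_query(R) = {p' | ∃ p ∈ α*(R), p ≤ p'}, then no configuration in R is reachable from a configuration in P₀: there is no c ∈ P₀ and c' ∈ R with (c, c') in the reflexive-transitive closure of S. -/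
/-- Lift of an abstraction function to sets of configurations. -/
def liftAbs {C P : Type*} (α : C → Set P) (S : Set C) : Set P :=
  ⋃ c ∈ S, α c

/-- If no derivable abstract configuration meets the query set for R,
then no configuration in R is reachable from a configuration in P₀. -/
theorem unreachability_from_query {C P : Type*} [Preorder P] (S : C → C → Prop)
    (α : C → Set P) (D : Set P → P → Prop)
    (hsound : ∀ c c', Relation.ReflTransGen S c c' →
      ∀ Δ : Set P, HoareLe (α c) Δ →
        ∃ Δ', Relation.ReflTransGen (DeriveStep D) Δ Δ' ∧ HoareLe (α c') Δ')
    (P₀ R : Set C) (hR : ∀ c' ∈ R, (α c').Nonempty)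
    (ΔP : Set P) (hΔP : HoareLe (liftAbs α P₀) ΔP)
    (hquery : ∀ Δ', Relation.ReflTransGen (DeriveStep D) ΔP Δ' →
      Δ' ∩ {p' : P | ∃ p ∈ liftAbs α R, p ≤ p'} = ∅) :
    ¬ ∃ c ∈ P₀, ∃ c' ∈ R, Relation.ReflTransGen S c c' := by
  rintro ⟨c, hc, c', hc', hreach⟩
  have hαc : HoareLe (α c) ΔP := fun p hp =>
    hΔP p (Set.mem_biUnion hc hp)
  obtain ⟨Δ', hder, hΔ'⟩ := hsound c c' hreach ΔP hαc
  obtain ⟨p, hp⟩ := hR c' hc'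
  obtain ⟨p₂, hp₂, hle⟩ := hΔ' p hp
  have : p₂ ∈ Δ' ∩ {p' : P | ∃ q ∈ liftAbs α R, q ≤ p'} :=
    ⟨hp₂, p, Set.mem_biUnion hc' hp, hle⟩
  rw [hquery Δ' hder] at this
  exact this
end

section
/- Let C be a type, S a binary relation on C, P a preorder, α : C → Set P, and D : Set P → P → Prop a one-step fact-derivation relation that is monotone with respect to set inclusion (X ⊆ Y and D X f imply D Y f). Suppose (α, D) soundly approximates S: for all c, c' with (c, c') in the reflexive-transitive closure of S, and every Δ with α(c) ⊑ Δ, there exists Δ' derivable from Δ with α(c') ⊑ Δ'. Then for every c : C and every Δ with α(c) ⊑ Δ, the abstraction of the set of configurations reachable from c is below the least fixed point of the abstract step function: α*({c' | ReflTransGen S c c'}) ⊑ lfp (X ↦ {p | D X p} ∪ Δ), where the least fixed point is taken in the complete lattice (Set P, ⊆) and ⊑ is the Hoare order. -/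
/-- A sound approximation yields: the abstraction of the set of reachable configurations
is below (Hoare order) the least fixed point of the abstract step function. -/
theorem sound_approx_le_lfp {C P : Type*} [Preorder P] (S : C → C → Prop)
    (α : C → Set P) (D : Set P → P → Prop)
    (hDmono : ∀ X Y : Set P, X ⊆ Y → ∀ f, D X f → D Y f)
    (hsound : ∀ c c', Relation.ReflTransGen S c c' →
      ∀ Δ : Set P, HoareLe (α c) Δ →
        ∃ Δ', Relation.ReflTransGen (DeriveStep D) Δ Δ' ∧ HoareLe (α c') Δ')
    (c : C) (Δ : Set P) (hΔ : HoareLe (α c) Δ)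
    (G : Set P →o Set P) (hG : ∀ X : Set P, G X = {p | D X p} ∪ Δ) :
    HoareLe (liftAbs α {c' | Relation.ReflTransGen S c c'}) (OrderHom.lfp G) := by
  have hfix : G (OrderHom.lfp G) = OrderHom.lfp G := G.map_lfp
  have hΔsub : Δ ⊆ OrderHom.lfp G := by
    intro p hp
    rw [← hfix, hG]
    exact Or.inr hp
  have hclos : ∀ X Y : Set P, Relation.ReflTransGen (DeriveStep D) X Y →
      X ⊆ OrderHom.lfp G → Y ⊆ OrderHom.lfp G := by
    intro X Y h
    induction h with
    | refl => exact fun h => h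
    | tail _ hstep ih =>
      intro hX
      obtain ⟨f, hDf, rfl⟩ := hstep
      have hb := ih hX
      apply Set.union_subset hb
      intro p hp
      rcases hp with rfl
      rw [← hfix, hG]
      exact Or.inl (hDmono _ _ hb _ hDf)
  intro p hp
  simp only [liftAbs, Set.mem_iUnion] at hp
  obtain ⟨c', hc', hpα⟩ := hp
  obtain ⟨Δ', hder, hle⟩ := hsound c c' hc' Δ hΔ
  obtain ⟨q, hq, hpq⟩ := hle p hpα
  exact ⟨q, hclos Δ Δ' hder hΔsub hq, hpq⟩
end

section
/- Let C be a type, S a binary relation on C, P a preorder, α : C → Set P, and D : Set P → P → Prop a one-step fact-derivation relation that is (i) monotone with respect to set inclusion (X ⊆ Y and D X f imply D Y f) and (ii) one-step monotone with respect to the Hoare order (Δ ⊑ Δ' and D Δ f imply there exists f' ≥ f with D Δ' f'). Suppose the abstract semantics over-approximates each small step: for all c, c' with S c c', α(c') ⊑ {p | D (α c) p}. Then for every c : C and every Δ with α(c) ⊑ Δ, α*({c' | ReflTransGen S c c'}) ⊑ lfp (X ↦ {p | D X p} ∪ Δ), where the least fixed point is taken in (Set P, ⊆) and ⊑ is the Hoare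 order. -/
/-- One-step over-approximation together with monotonicity of the abstract semantics
suffices for soundness in least-fixed-point form. -/
theorem one_step_approx_le_lfp {C P : Type*} [Preorder P] (S : C → C → Prop)
    (α : C → Set P) (D : Set P → P → Prop)
    (hDmono : ∀ X Y : Set P, X ⊆ Y → ∀ f, D X f → D Y f)
    (hDhoare : ∀ Δ Δ' : Set P, ∀ f, HoareLe Δ Δ' → D Δ f → ∃ f', f ≤ f' ∧ D Δ' f')
    (happrox : ∀ c c', S c c' → HoareLe (α c') {p | D (α c) p})
    (c : C) (Δ : Set P) (hΔ : HoareLe (α c) Δ)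
    (G : Set P →o Set P) (hG : ∀ X : Set P, G X = {p | D X p} ∪ Δ) :
    HoareLe (liftAbs α {c' | Relation.ReflTransGen S c c'}) (OrderHom.lfp G) := by
  have hfix : G (OrderHom.lfp G) = OrderHom.lfp G := OrderHom.map_lfp G
  have hFeq : {p | D (OrderHom.lfp G) p} ∪ Δ = OrderHom.lfp G := by
    rw [← hG]; exact hfix
  have key : ∀ c', Relation.ReflTransGen S c c' → HoareLe (α c') (OrderHom.lfp G) := by
    intro c' h
    induction h with
    | refl =>
      intro p hp
      obtain ⟨q, hq, hle⟩ := hΔ p hp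
      exact ⟨q, hFeq ▸ Or.inr hq, hle⟩
    | @tail b b' hbc hstep ih =>
      intro p hp
      obtain ⟨q, hq, hle⟩ := happrox b b' hstep p hp
      obtain ⟨q', hle', hD⟩ := hDhoare (α b) (OrderHom.lfp G) q ih hq
      exact ⟨q', hFeq ▸ Or.inl hD, le_trans hle hle'⟩
  intro p hp
  simp only [liftAbs, Set.mem_iUnion] at hp
  obtain ⟨c', hc', hpc'⟩ := hp
  exact key c' hc' p hpc'
end

section
/- Let m : ℕ → ℕ be a byte memory with m i < 256 for all i, and define the word-packed memory W : ℕ → ℕ by W x = ∑_{i=0}^{31} m (32·x + i) · 256^(31−i) (big-endian packing of 32 consecutive bytes into one word). Then for every byte offset p : ℕ, the word read at byte offset p, namely ∑_{i=0}^{31} m (p + i) · 256^(31−i), is correctly recovered from the word-packed memory: if p % 32 = 0 it equals W (p / 32); otherwise, writing k = p % 32 and q = p / 32, it equals (W q % 256^(32−k)) · 256^k + W (q + 1) / 256^(32−k) (with integer division). -/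
lemma byte_sum_lt (b : ℕ → ℕ) (hb : ∀ i, b i < 256) :
    ∀ n, (∑ i ∈ Finset.range n, b i * 256 ^ (n - 1 - i)) < 256 ^ n := by
  intro n
  induction n with
  | zero => simp
  | succ n ih =>
    rw [Finset.sum_range_succ]
    have h1 : (∑ i ∈ Finset.range n, b i * 256 ^ (n + 1 - 1 - i)) =
        (∑ i ∈ Finset.range n, b i * 256 ^ (n - 1 - i)) * 256 := by
      rw [Finset.sum_mul]
      apply Finset.sum_congr rfl
      intro i hi
      rw [Finset.mem_range] at hi
      have : n + 1 - 1 - i = (n - 1 - i) + 1 := by omega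
      rw [this, pow_succ]; ring
    rw [h1]
    simp only [Nat.add_sub_cancel, Nat.sub_self, pow_zero, mul_one]
    have := hb n
    calc (∑ i ∈ Finset.range n, b i * 256 ^ (n - 1 - i)) * 256 + b n
        < (∑ i ∈ Finset.range n, b i * 256 ^ (n - 1 - i)) * 256 + 256 := by omega
      _ ≤ 256 ^ n * 256 := by nlinarith [ih]
      _ = 256 ^ (n + 1) := by rw [pow_succ]

lemma byte_sum_split (b : ℕ → ℕ) (n k : ℕ) (hk : k ≤ n) :
    (∑ i ∈ Finset.range n, b i * 256 ^ (n - 1 - i)) =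
      (∑ i ∈ Finset.range k, b i * 256 ^ (k - 1 - i)) * 256 ^ (n - k) +
      ∑ i ∈ Finset.range (n - k), b (k + i) * 256 ^ (n - k - 1 - i) := by
  obtain ⟨j, rfl⟩ : ∃ j, n = k + j := ⟨n - k, by omega⟩
  simp only [Nat.add_sub_cancel_left]
  rw [Finset.sum_range_add, Finset.sum_mul]
  congr 1
  · apply Finset.sum_congr rfl
    intro i hi
    rw [Finset.mem_range] at hi
    have : k + j - 1 - i = (k - 1 - i) + j := by omega
    rw [this, pow_add]; ring
  · apply Finset.sum_congr rfl
    intro i hi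
    rw [Finset.mem_range] at hi
    have : k + j - 1 - (k + i) = j - 1 - i := by omega
    rw [this]

set_option maxHeartbeats 1000000 in
/-- Soundness of word-indexed memory access: the word at an arbitrary byte offset p in a
byte memory m is correctly recovered from the word-packed memory W (big-endian packing). -/
theorem word_access_sound (m : ℕ → ℕ) (hm : ∀ i : ℕ, m i < 256)
    (W : ℕ → ℕ)
    (hW : ∀ x : ℕ, W x = ∑ i ∈ Finset.range 32, m (32 * x + i) * 256 ^ (31 - i)) :
    ∀ p : ℕ,
      (∑ i ∈ Finset.range 32, m (p + i) * 256 ^ (31 - i)) =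
        if p % 32 = 0 then W (p / 32)
        else (W (p / 32) % 256 ^ (32 - p % 32)) * 256 ^ (p % 32) +
          W (p / 32 + 1) / 256 ^ (32 - p % 32) := by
  intro p
  set q := p / 32 with hq
  set k := p % 32 with hk
  have hp : p = 32 * q + k := by rw [hq, hk]; omega
  have hklt : k < 32 := Nat.mod_lt _ (by norm_num)
  by_cases h0 : k = 0
  · rw [if_pos h0, hW q]
    apply Finset.sum_congr rfl
    intro i _
    congr 2
    omega
  · rw [if_neg h0]
    have h31 : ∀ i : ℕ, (32 : ℕ) - 1 - i = 31 - i := fun i => by omega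
    -- W q split at k
    have hWq : W q = (∑ i ∈ Finset.range k, m (32 * q + i) * 256 ^ (k - 1 - i)) * 256 ^ (32 - k) +
        ∑ i ∈ Finset.range (32 - k), m (32 * q + (k + i)) * 256 ^ (32 - k - 1 - i) := by
      rw [hW q, ← byte_sum_split (fun i => m (32 * q + i)) 32 k (le_of_lt hklt)]
    have hlow : (∑ i ∈ Finset.range (32 - k), m (32 * q + (k + i)) * 256 ^ (32 - k - 1 - i)) <
        256 ^ (32 - k) := byte_sum_lt (fun i => m (32 * q + (k + i))) (fun i => hm _) (32 - k)
    have hmod : W q % 256 ^ (32 - k) =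
        ∑ i ∈ Finset.range (32 - k), m (32 * q + (k + i)) * 256 ^ (32 - k - 1 - i) := by
      rw [hWq, add_comm, Nat.add_mul_mod_self_right, Nat.mod_eq_of_lt hlow]
    -- W (q+1) split at k
    have hWq1 : W (q + 1) = (∑ i ∈ Finset.range k, m (32 * (q + 1) + i) * 256 ^ (k - 1 - i)) * 256 ^ (32 - k) +
        ∑ i ∈ Finset.range (32 - k), m (32 * (q + 1) + (k + i)) * 256 ^ (32 - k - 1 - i) := by
      rw [hW (q + 1), ← byte_sum_split (fun i => m (32 * (q + 1) + i)) 32 k (le_of_lt hklt)]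
    have hlow1 : (∑ i ∈ Finset.range (32 - k), m (32 * (q + 1) + (k + i)) * 256 ^ (32 - k - 1 - i)) <
        256 ^ (32 - k) := byte_sum_lt (fun i => m (32 * (q + 1) + (k + i))) (fun i => hm _) (32 - k)
    have hdiv : W (q + 1) / 256 ^ (32 - k) =
        ∑ i ∈ Finset.range k, m (32 * (q + 1) + i) * 256 ^ (k - 1 - i) := by
      rw [hWq1, add_comm, Nat.add_mul_div_right _ _ (Nat.pow_pos (by norm_num : 0 < 256)),
        Nat.div_eq_of_lt hlow1, zero_add]
    rw [hmod, hdiv]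
    -- split target sum at 32 - k
    have htarget := byte_sum_split (fun i => m (p + i)) 32 (32 - k) (by omega)
    have hnk : 32 - (32 - k) = k := by omega
    rw [hnk] at htarget
    calc (∑ i ∈ Finset.range 32, m (p + i) * 256 ^ (31 - i))
        = ∑ i ∈ Finset.range 32, m (p + i) * 256 ^ (32 - 1 - i) :=
          Finset.sum_congr rfl fun i _ => by rw [h31]
      _ = (∑ i ∈ Finset.range (32 - k), m (p + i) * 256 ^ (32 - k - 1 - i)) * 256 ^ k +
          ∑ i ∈ Finset.range k, m (p + (32 - k + i)) * 256 ^ (k - 1 - i) := htarget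
      _ = _ := by
          have e1 : (∑ i ∈ Finset.range (32 - k), m (p + i) * 256 ^ (32 - k - 1 - i)) =
              ∑ i ∈ Finset.range (32 - k), m (32 * q + (k + i)) * 256 ^ (32 - k - 1 - i) :=
            Finset.sum_congr rfl fun i hi => by
              rw [Finset.mem_range] at hi
              have : p + i = 32 * q + (k + i) := by omega
              rw [this]
          have e2 : (∑ i ∈ Finset.range k, m (p + (32 - k + i)) * 256 ^ (k - 1 - i)) =
              ∑ i ∈ Finset.range k, m (32 * (q + 1) + i) * 256 ^ (k - 1 - i) :=
            Finset.sum_congr rfl fun i hi => by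
              rw [Finset.mem_range] at hi
              have : p + (32 - k + i) = 32 * (q + 1) + i := by omega
              rw [this]
          rw [e1, e2]
end

section
/- Let ⊑ be the flat order on WithTop ℕ, and let accessword : (ℕ → WithTop ℕ) → ℕ → WithTop ℕ be the word-access function defined via the abstract byte-extraction and abstract append. Let size : ℕ with size ≥ 1, let s, s' : ℕ → WithTop ℕ be abstract stacks with s i ⊑ s' i for all i < size, and let m, m' : ℕ → WithTop ℕ be abstract memories with m n ⊑ m' n for all n. Define v = accessword m o if s (size − 1) = some o and v = ⊤ if s (size − 1) = ⊤, and define v' analogously from s' and m'. Then for all i < size, (Function.update s (size − 1) v) i ⊑ (Function.update s' (size − 1) v') i. This is the monotonicity of the abstract-semantics clause for the MLOAD memory-load operation. -/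
/-- The flat order on WithTop ℕ: a ⊑ b iff b = ⊤ or a = b. -/
def FlatLe (a b : WithTop ℕ) : Prop := b = ⊤ ∨ a = b

/-- Abstract byte-extraction from an abstract word. -/
def extract : WithTop ℕ → ℕ → ℕ → WithTop ℕ
  | some n, l, r => if l ≤ r then some (n / 256 ^ (31 - r) % 256 ^ (r - l + 1)) else ⊤
  | ⊤, _, _ => ⊤

/-- Abstract append of (the byte representations of) two abstract values. -/
def absAppend (n : ℕ) : WithTop ℕ → WithTop ℕ → WithTop ℕ
  | some v, some w => some (w * 256 ^ n + v)
  | _, _ => ⊤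

/-- Word access at byte offset p in a word-indexed abstract memory. -/
def accessword (m : ℕ → WithTop ℕ) (p : ℕ) : WithTop ℕ :=
  if p % 32 = 0 then m (p / 32)
  else absAppend (p % 32) (extract (m (p / 32)) (p % 32) 31)
    (extract (m (p / 32 + 1)) 0 (p % 32 - 1))

/-- The value loaded by MLOAD: the word at a concrete offset, and ⊤ if the offset is ⊤. -/
def absLoad (m : ℕ → WithTop ℕ) : WithTop ℕ → WithTop ℕ
  | some o => accessword m o
  | ⊤ => ⊤


lemma extract_mono {a b : WithTop ℕ} (h : FlatLe a b) (l r : ℕ) :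
    FlatLe (extract a l r) (extract b l r) := by
  rcases h with h | h
  · subst h; left; rfl
  · subst h; right; rfl

lemma absAppend_mono {a b c d : WithTop ℕ} (n : ℕ)
    (h1 : FlatLe a b) (h2 : FlatLe c d) :
    FlatLe (absAppend n a c) (absAppend n b d) := by
  rcases h1 with h1 | h1
  · subst h1; left; cases d <;> rfl
  · subst h1
    rcases h2 with h2 | h2
    · subst h2; left; cases a <;> rfl
    · subst h2; right; rfl

lemma accessword_mono {m m' : ℕ → WithTop ℕ} (hm : ∀ n, FlatLe (m n) (m' n)) (p : ℕ) :
    FlatLe (accessword m p) (accessword m' p) := by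
  unfold accessword
  split
  · exact hm _
  · exact absAppend_mono _ (extract_mono (hm _) _ _) (extract_mono (hm _) _ _)

lemma absLoad_mono {m m' : ℕ → WithTop ℕ} (hm : ∀ n, FlatLe (m n) (m' n))
    {a b : WithTop ℕ} (h : FlatLe a b) :
    FlatLe (absLoad m a) (absLoad m' b) := by
  rcases h with h | h
  · subst h; left; rfl
  · subst h
    rcases a with _ | o
    · left; rfl
    · exact accessword_mono hm o

/-- Monotonicity of the abstract-semantics clause for MLOAD. -/
theorem mload_stack_monotone (size : ℕ) (hsize : 1 ≤ size)
    (s s' : ℕ → WithTop ℕ) (hs : ∀ i < size, FlatLe (s i) (s' i))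
    (m m' : ℕ → WithTop ℕ) (hm : ∀ n : ℕ, FlatLe (m n) (m' n)) :
    ∀ i < size,
      FlatLe
        (Function.update s (size - 1) (absLoad m (s (size - 1))) i)
        (Function.update s' (size - 1) (absLoad m' (s' (size - 1))) i) := by
  intro i hi
  by_cases hieq : i = size - 1
  · subst hieq
    simp only [Function.update_self]
    exact absLoad_mono hm (hs _ (Nat.sub_lt hsize one_pos))
  · simp only [Function.update_of_ne hieq]
    exact hs i hi
end
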